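/- Let $X$ be a metric space and $k\in\mathbb{N}$. If $\mathrm{coasdim}(X)\le fin+k$, then $\mathrm{trasdim}(X)\le\omega+k-1$. -/

import Mathlib

noncomputable section
open Metric Set
open scoped ENNReal

/-- A family of subsets is `R`-bounded if every member has diameter at most `R`. -/
def RBounded {X : Type*} [PseudoMetricSpace X] (R : ℝ) (U : Set (Set X)) : Prop :=
  ∀ A ∈ U, ∀ x ∈ A, ∀ y ∈ A, dist x y ≤ R

/-- A family of subsets is `r`-disjoint if distinct members are at distance at least `r`. -/
def RDisjoint {X : Type*} [PseudoMetricSpace X] (r : ℝ) (U : Set (Set X)) : Prop :=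
  ∀ A ∈ U, ∀ B ∈ U, A ≠ B → ∀ x ∈ A, ∀ y ∈ B, r ≤ dist x y

/-- A family of subsets is uniformly bounded if it is `R`-bounded for some `R`. -/
def UniformlyBounded {X : Type*} [PseudoMetricSpace X] (U : Set (Set X)) : Prop :=
  ∃ R : ℝ, RBounded R U

/-- `asdim X ≤ n`: for every `r > 0` there are `n+1` uniformly bounded, `r`-disjoint
families of subsets of `X` whose union covers `X`. -/
def AsdimLE (X : Type*) [PseudoMetricSpace X] (n : ℕ) : Prop :=
  ∀ r : ℝ, 0 < r → ∃ U : Fin (n + 1) → Set (Set X),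
    (∀ i, UniformlyBounded (U i)) ∧ (∀ i, RDisjoint r (U i)) ∧
    (Set.univ : Set X) ⊆ ⋃ i, ⋃₀ U i

/-- `coasdim X ≤ fin + k`: for every `n > 0` there are `k` many `n`-disjoint, `R`-bounded
families whose complement has asymptotic dimension at most some `m`. -/
def CoasdimLE (X : Type*) [PseudoMetricSpace X] (k : ℕ) : Prop :=
  ∀ n : ℝ, 0 < n → ∃ (R : ℝ) (m : ℕ) (U : Fin k → Set (Set X)),
    (∀ i, RDisjoint n (U i)) ∧ (∀ i, RBounded R (U i)) ∧
    AsdimLE (↥((⋃ i, ⋃₀ U i)ᶜ : Set X)) m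

/-- `M^a` in Borst's notation. -/
def Mder (M : Set (Finset ℕ)) (a : ℕ) : Set (Finset ℕ) :=
  {τ | insert a τ ∈ M ∧ a ∉ τ}

/-- `OrdLE α M` means `Ord M ≤ α` in Borst's sense: `Ord M = 0` iff `M = ∅`, and
`Ord M ≤ α` iff `Ord M^a < α` for every `a ∈ ℕ`. -/
def OrdLE (α : Ordinal) (M : Set (Finset ℕ)) : Prop :=
  M = ∅ ∨ ∀ a : ℕ, ∃ β : {β : Ordinal // β < α}, OrdLE β.1 (Mder M a)
termination_by α
decreasing_by exact β.2

/-- The collection `A(X,d)` of finite sets `σ ⊆ ℕ` for which there are no uniformly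
bounded families `U i` (`i ∈ σ`), each `i`-disjoint, whose union covers `X`. -/
def AColl (X : Type*) [PseudoMetricSpace X] : Set (Finset ℕ) :=
  {σ | σ.Nonempty ∧ ¬ ∃ U : ℕ → Set (Set X),
    (∀ i ∈ σ, UniformlyBounded (U i)) ∧ (∀ i ∈ σ, RDisjoint (i : ℝ) (U i)) ∧
    (Set.univ : Set X) ⊆ ⋃ i ∈ σ, ⋃₀ U i}

/-! ### Auxiliary lemmas -/

lemma ordLE_mono {α α' : Ordinal} (h : α ≤ α') {M : Set (Finset ℕ)} (hM : OrdLE α M) :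
    OrdLE α' M := by
  rw [OrdLE] at hM ⊢
  rcases hM with h0 | h1
  · exact Or.inl h0
  · exact Or.inr fun a => ⟨⟨(h1 a).choose.1, lt_of_lt_of_le (h1 a).choose.2 h⟩, (h1 a).choose_spec⟩

lemma ordLE_empty (α : Ordinal) : OrdLE α ∅ := by rw [OrdLE]; exact Or.inl rfl

lemma ordLE_card : ∀ (N : ℕ) (M : Set (Finset ℕ)), (∀ σ ∈ M, σ.card ≤ N) →
    OrdLE ((N + 1 : ℕ) : Ordinal) M := by
  intro N
  induction N with
  | zero =>
    intro M hM
    rw [OrdLE]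
    refine Or.inr fun a => ⟨⟨0, by simpa using zero_lt_one⟩, ?_⟩
    rw [OrdLE]
    left
    ext τ
    simp only [Set.mem_empty_iff_false, iff_false]
    rintro ⟨hmem, hna⟩
    have := hM _ hmem
    simp [Finset.card_insert_of_notMem hna] at this
  | succ N ih =>
    intro M hM
    rw [OrdLE]
    refine Or.inr fun a => ⟨⟨((N + 1 : ℕ) : Ordinal), by exact_mod_cast Nat.lt_succ_self _⟩, ?_⟩
    refine ih _ fun τ hτ => ?_
    obtain ⟨hmem, hna⟩ := hτ
    have := hM _ hmem
    rw [Finset.card_insert_of_notMem hna] at this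
    omega

/-- Iterated derivative along a finite set. -/
def MderF (M : Set (Finset ℕ)) (s : Finset ℕ) : Set (Finset ℕ) :=
  {τ | s ∪ τ ∈ M ∧ Disjoint s τ}

lemma mderF_empty (M : Set (Finset ℕ)) : MderF M ∅ = M := by
  ext τ; simp [MderF]

lemma mder_mderF (M : Set (Finset ℕ)) (s : Finset ℕ) (a : ℕ) :
    Mder (MderF M s) a = if a ∈ s then ∅ else MderF M (insert a s) := by
  ext τ
  by_cases ha : a ∈ s
  · simp only [ha, if_true, Set.mem_empty_iff_false, iff_false]
    rintro ⟨⟨-, hd⟩, -⟩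
    exact (Finset.disjoint_left.mp hd ha) (Finset.mem_insert_self a τ)
  · simp only [ha, if_false, Mder, MderF, Set.mem_setOf_eq]
    constructor
    · rintro ⟨⟨hmem, hd⟩, hna⟩
      constructor
      · rw [Finset.insert_union]; rwa [Finset.union_insert] at hmem
      · rw [Finset.insert_eq, Finset.disjoint_union_left]
        refine ⟨by simpa using hna, ?_⟩
        exact (Finset.disjoint_insert_right.mp (by rwa [Finset.insert_eq] at hd)).2
    · rintro ⟨hmem, hd⟩
      rw [Finset.insert_eq, Finset.disjoint_union_left] at hd
      obtain ⟨hd1, hd2⟩ := hd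
      have hna : a ∉ τ := by simpa using hd1
      refine ⟨⟨?_, ?_⟩, hna⟩
      · rw [Finset.union_insert]; rwa [Finset.insert_union] at hmem
      · rw [Finset.insert_eq, Finset.disjoint_union_right]
        exact ⟨by simpa [Finset.disjoint_singleton_right] using ha, hd2⟩

lemma rdisjoint_mono {X : Type*} [PseudoMetricSpace X] {r r' : ℝ} (h : r ≤ r')
    {U : Set (Set X)} (hU : RDisjoint r' U) : RDisjoint r U :=
  fun A hA B hB hne x hx y hy => le_trans h (hU A hA B hB hne x hx y hy)

lemma rbounded_image {X : Type*} [PseudoMetricSpace X] {Y : Set X} {R : ℝ}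
    {U : Set (Set Y)} (h : RBounded R U) :
    RBounded R ((fun A => (Subtype.val '' A : Set X)) '' U) := by
  rintro _ ⟨A, hA, rfl⟩ _ ⟨x, hx, rfl⟩ _ ⟨y, hy, rfl⟩
  have := h A hA x hx y hy
  rwa [Subtype.dist_eq] at this

lemma rdisjoint_image {X : Type*} [PseudoMetricSpace X] {Y : Set X} {r : ℝ}
    {U : Set (Set Y)} (h : RDisjoint r U) :
    RDisjoint r ((fun A => (Subtype.val '' A : Set X)) '' U) := by
  rintro _ ⟨A, hA, rfl⟩ _ ⟨B, hB, rfl⟩ hne _ ⟨x, hx, rfl⟩ _ ⟨y, hy, rfl⟩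
  have hAB : A ≠ B := by rintro rfl; exact hne rfl
  have := h A hA B hB hAB x hx y hy
  rwa [Subtype.dist_eq] at this

/-- Key lemma: given `coasdim X ≤ fin + k` and a `k`-element set `s`, the iterated
derivative of `AColl X` along `s` has uniformly bounded member cardinality. -/
lemma key {X : Type*} [PseudoMetricSpace X] {k : ℕ} (h : CoasdimLE X k)
    (s : Finset ℕ) (hs : s.card = k) :
    ∃ m : ℕ, ∀ τ ∈ MderF (AColl X) s, τ.card ≤ m := by
  classical
  obtain ⟨R, m, V, hVdisj, hVbdd, hVasdim⟩ :=
    h (((s.sup id : ℕ) : ℝ) + 1) (by positivity)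
  refine ⟨m, ?_⟩
  rintro τ ⟨hτM, hdisj⟩
  by_contra hcard
  push_neg at hcard
  have hcard' : m + 1 ≤ τ.card := hcard
  obtain ⟨W, hWbdd, hWdisj, hWcov⟩ := hVasdim (((τ.sup id : ℕ) : ℝ) + 1) (by positivity)
  set W' : Fin (m + 1) → Set (Set X) :=
    fun j => (fun A => (Subtype.val '' A : Set X)) '' (W j) with hW'
  set g : Fin (m + 1) → {x // x ∈ τ} :=
    fun j => τ.equivFin.symm (Fin.castLE hcard' j) with hg
  have ginj : Function.Injective g := by
    intro a b hab
    have := congrArg τ.equivFin hab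
    simpa [hg, Fin.ext_iff] using this
  set U : ℕ → Set (Set X) := fun i =>
    if hi : i ∈ s then V (Fin.cast hs (s.equivFin ⟨i, hi⟩))
    else if h2 : ∃ j : Fin (m + 1), ((g j : ℕ) = i) then W' h2.choose
    else ∅ with hU
  refine hτM.2 ⟨U, ?_, ?_, ?_⟩
  · -- uniformly bounded
    intro i _
    by_cases hi : i ∈ s
    · rw [hU]; simp only [hi, dif_pos]
      exact ⟨R, hVbdd _⟩
    · by_cases h2 : ∃ j : Fin (m + 1), ((g j : ℕ) = i)
      · rw [hU]; simp only [hi, dif_neg, not_false_iff, h2, dif_pos]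
        obtain ⟨R', hR'⟩ := hWbdd h2.choose
        exact ⟨R', rbounded_image hR'⟩
      · rw [hU]; simp only [hi, dif_neg, not_false_iff, h2]
        exact ⟨0, by rintro A ⟨⟩⟩
  · -- disjointness
    intro i hi'
    by_cases hi : i ∈ s
    · rw [hU]; simp only [hi, dif_pos]
      refine rdisjoint_mono ?_ (hVdisj _)
      have : (i : ℕ) ≤ s.sup id := Finset.le_sup (f := id) hi
      have : ((i : ℕ) : ℝ) ≤ ((s.sup id : ℕ) : ℝ) := by exact_mod_cast this
      linarith
    · by_cases h2 : ∃ j : Fin (m + 1), ((g j : ℕ) = i)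
      · rw [hU]; simp only [hi, dif_neg, not_false_iff, h2, dif_pos]
        refine rdisjoint_mono ?_ (rdisjoint_image (hWdisj _))
        have hiτ : i ∈ τ := by
          obtain ⟨j, hj⟩ := h2
          exact hj ▸ (g j).2
        have : (i : ℕ) ≤ τ.sup id := Finset.le_sup (f := id) hiτ
        have : ((i : ℕ) : ℝ) ≤ ((τ.sup id : ℕ) : ℝ) := by exact_mod_cast this
        linarith
      · rw [hU]; simp only [hi, dif_neg, not_false_iff, h2]
        rintro A ⟨⟩
  · -- covering
    intro x _
    by_cases hx : x ∈ ⋃ i, ⋃₀ V i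
    · obtain ⟨T, ⟨j, rfl⟩, hxT⟩ := hx
      obtain ⟨A, hA, hxA⟩ := hxT
      set i₀ : {y // y ∈ s} := s.equivFin.symm (Fin.cast hs.symm j) with hi₀
      have hi : (i₀ : ℕ) ∈ s := i₀.2
      have hUi : U (i₀ : ℕ) = V j := by
        rw [hU]
        simp only [hi, dif_pos]
        have h1 : (⟨(i₀ : ℕ), hi⟩ : {y // y ∈ s}) = i₀ := Subtype.coe_eta _ _
        rw [h1, hi₀, Equiv.apply_symm_apply]
        congr 1
      refine Set.mem_iUnion₂.mpr ⟨(i₀ : ℕ), Finset.mem_union_left τ hi, ?_⟩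
      rw [hUi]
      exact ⟨A, hA, hxA⟩
    · have hxY : x ∈ ((⋃ i, ⋃₀ V i)ᶜ : Set X) := hx
      have := hWcov (Set.mem_univ (⟨x, hxY⟩ : ↥((⋃ i, ⋃₀ V i)ᶜ : Set X)))
      obtain ⟨T, ⟨j, rfl⟩, hxT⟩ := this
      obtain ⟨A, hA, hxA⟩ := hxT
      set i : ℕ := (g j : ℕ) with hidef
      have hiτ : i ∈ τ := (g j).2
      have hins : i ∉ s := Finset.disjoint_right.mp hdisj hiτ
      have h2 : ∃ j' : Fin (m + 1), ((g j' : ℕ) = i) := ⟨j, rfl⟩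
      have hch : h2.choose = j := by
        apply ginj
        apply Subtype.coe_injective
        exact h2.choose_spec
      have hUi : U i = W' j := by
        rw [hU]
        simp only [hins, dif_neg, not_false_iff, h2, dif_pos]
        rw [hch]
      refine Set.mem_iUnion₂.mpr ⟨i, Finset.mem_union_right s hiτ, ?_⟩
      rw [hUi, hW']
      exact ⟨Subtype.val '' A, ⟨A, hA, rfl⟩, ⟨⟨x, hxY⟩, hxA, rfl⟩⟩

lemma main_ind {X : Type*} [PseudoMetricSpace X] {k : ℕ} (h : CoasdimLE X k) :
    ∀ j : ℕ, 1 ≤ j → j ≤ k → ∀ s : Finset ℕ, s.card = k - j →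
      OrdLE (Ordinal.omega0 + ((j - 1 : ℕ) : Ordinal)) (MderF (AColl X) s) := by
  intro j
  induction j with
  | zero => intro hj; exact absurd hj (by omega)
  | succ j ih =>
    intro _ hjk s hs
    rw [OrdLE]
    refine Or.inr fun a => ?_
    by_cases ha : a ∈ s
    · refine ⟨⟨0, lt_of_lt_of_le Ordinal.omega0_pos le_self_add⟩, ?_⟩
      rw [mder_mderF, if_pos ha]
      exact ordLE_empty 0
    · cases Nat.eq_zero_or_pos j with
      | inl hj0 =>
        subst hj0
        obtain ⟨m, hm⟩ := key h (insert a s)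
          (by rw [Finset.card_insert_of_notMem ha, hs]; omega)
        refine ⟨⟨((m + 1 : ℕ) : Ordinal), ?_⟩, ?_⟩
        · simpa using Ordinal.nat_lt_omega0 (m + 1)
        · rw [mder_mderF, if_neg ha]
          exact ordLE_card m _ hm
      | inr hj1 =>
        refine ⟨⟨Ordinal.omega0 + ((j - 1 : ℕ) : Ordinal), ?_⟩, ?_⟩
        · have hlt : (j - 1 : ℕ) < (j + 1 - 1 : ℕ) := by omega
          exact (add_lt_add_iff_left _).mpr (by exact_mod_cast hlt)
        · rw [mder_mderF, if_neg ha]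
          exact ih hj1 (by omega) (insert a s)
            (by rw [Finset.card_insert_of_notMem ha, hs]; omega)

/-- Theorem 3.5: `coasdim X ≤ fin + k` implies `trasdim X ≤ ω + k - 1`. -/
theorem trasdim_le_of_coasdim {X : Type*} [PseudoMetricSpace X] (k : ℕ) (hk : 1 ≤ k)
    (h : CoasdimLE X k) :
    OrdLE (Ordinal.omega0 + ((k - 1 : ℕ) : Ordinal)) (AColl X) := by
  have := main_ind h k hk le_rfl ∅ (by simp)
  rwa [mderF_empty] at this
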